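/- Let k be a field and let U = ⊕_{i∈ℤ} U_i and V = ⊕_{i∈ℤ} V_i be ℤ-graded k-vector spaces such that V_i = 0 for all but finitely many i. Let a ∈ ℤ, let q ≥ 1 be an integer, and let ψ₊, ψ₋ : U → V be linear maps with ψ₊(U_i) ⊆ V_{i+a} and ψ₋(U_i) ⊆ V_{i+a+q} for all i ∈ ℤ. Suppose there are integers B and T with B ≤ T + 1 such that ψ₊ restricts to a bijection from U_{i−a} onto V_i for every i ≥ B, and ψ₋ restricts to a bijection from U_{i−a−q} onto V_i for every i ≤ T. Then for every k-vector space Z, every linear map F : V → Z satisfying F ∘ ψ₊ = F ∘ ψ₋ is the zero map. -/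

import Mathlib

theorem stmt7 (k : Type*) [Field k]
    (U V : Type*) [AddCommGroup U] [Module k U] [AddCommGroup V] [Module k V]
    (𝒰 : ℤ → Submodule k U) (𝒱 : ℤ → Submodule k V)
    (hU : DirectSum.IsInternal 𝒰) (hV : DirectSum.IsInternal 𝒱)
    (hVfin : {i : ℤ | 𝒱 i ≠ ⊥}.Finite)
    (a q : ℤ) (hq : 1 ≤ q)
    (ψp ψm : U →ₗ[k] V)
    (hψp : ∀ i : ℤ, ∀ x ∈ 𝒰 i, ψp x ∈ 𝒱 (i + a))
    (hψm : ∀ i : ℤ, ∀ x ∈ 𝒰 i, ψm x ∈ 𝒱 (i + a + q))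
    (B T : ℤ) (hBT : B ≤ T + 1)
    (hbijp : ∀ i : ℤ, B ≤ i → Set.BijOn ψp (𝒰 (i - a) : Set U) (𝒱 i : Set V))
    (hbijm : ∀ i : ℤ, i ≤ T → Set.BijOn ψm (𝒰 (i - a - q) : Set U) (𝒱 i : Set V)) :
    ∀ (Z : Type*) [AddCommGroup Z] [Module k Z] (F : V →ₗ[k] Z),
      F.comp ψp = F.comp ψm → F = 0 := by
  intro Z _ _ F hFc
  have hF : ∀ u, F (ψp u) = F (ψm u) := fun u => LinearMap.congr_fun hFc u
  obtain ⟨N, hN⟩ := hVfin.bddAbove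
  obtain ⟨M, hM⟩ := hVfin.bddBelow
  have hNtriv : ∀ i : ℤ, N < i → ∀ v ∈ 𝒱 i, F v = 0 := by
    intro i hi v hv
    have hb : 𝒱 i = ⊥ := by
      by_contra h
      exact absurd (hN h) (not_le.mpr hi)
    rw [hb, Submodule.mem_bot] at hv
    simp [hv]
  have hMtriv : ∀ i : ℤ, i < M → ∀ v ∈ 𝒱 i, F v = 0 := by
    intro i hi v hv
    have hb : 𝒱 i = ⊥ := by
      by_contra h
      exact absurd (hM h) (not_le.mpr hi)
    rw [hb, Submodule.mem_bot] at hv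
    simp [hv]
  have hup : ∀ n : ℕ, ∀ i : ℤ, B ≤ i → N - i < n → ∀ v ∈ 𝒱 i, F v = 0 := by
    intro n
    induction n with
    | zero => intro i _ hlt v hv; exact hNtriv i (by omega) v hv
    | succ n ih =>
      intro i hi hlt v hv
      rcases lt_or_ge N i with h | h
      · exact hNtriv i h v hv
      · obtain ⟨u, hu, huv⟩ := (hbijp i hi).surjOn hv
        have h2 : ψm u ∈ 𝒱 (i + q) := by
          have := hψm (i - a) u hu
          rwa [show i - a + a + q = i + q by ring] at this
        have h3 := ih (i + q) (by omega) (by omega) (ψm u) h2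
        rw [← huv, hF u, h3]
  have hdown : ∀ n : ℕ, ∀ i : ℤ, i ≤ T → i - M < n → ∀ v ∈ 𝒱 i, F v = 0 := by
    intro n
    induction n with
    | zero => intro i _ hlt v hv; exact hMtriv i (by omega) v hv
    | succ n ih =>
      intro i hi hlt v hv
      rcases lt_or_ge i M with h | h
      · exact hMtriv i h v hv
      · obtain ⟨u, hu, huv⟩ := (hbijm i hi).surjOn hv
        have h2 : ψp u ∈ 𝒱 (i - q) := by
          have := hψp (i - a - q) u hu
          rwa [show i - a - q + a = i - q by ring] at this
        have h3 := ih (i - q) (by omega) (by omega) (ψp u) h2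
        rw [← huv, ← hF u, h3]
  have hall : ∀ i : ℤ, ∀ v ∈ 𝒱 i, F v = 0 := by
    intro i v hv
    rcases le_or_gt B i with h | h
    · exact hup (N - i + 1).toNat i h (by omega) v hv
    · exact hdown (i - M + 1).toNat i (by omega) (by omega) v hv
  ext v
  have hv : v ∈ iSup 𝒱 := by
    rw [hV.submodule_iSup_eq_top]; trivial
  refine Submodule.iSup_induction (motive := fun w => F w = 0) 𝒱 hv
    (fun i x hx => hall i x hx) (by simp) ?_
  intro x y hx hy
  simp [hx, hy]
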